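/- arXiv:1711.00831 — 3 statements merged into one kernel-verified Lean document; each statement's English description precedes it below -/
import Mathlib

section
/- For every feasible flow φ on G and every arc a ∈ A \ {(t,s)}, there exists an adaptive flow φ' with respect to φ and A' = {a} whose value satisfies φ'(t,s) ≥ φ(t,s) − φ(a); hence the adaptive residual value satisfies ρ(φ, {a}) ≥ φ(t,s) − φ(a), i.e., the loss of flow caused by the destruction of a single arc a is at most the amount of flow φ(a) carried by that arc. -/
open Finset

/-- A directed network with source `s`, sink `t`, nonnegative capacities and a
distinguished dummy arc from `t` to `s` (whose capacity is not constrained). -/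
structure Network (V : Type) (A : Type) [Fintype V] [Fintype A]
    [DecidableEq V] [DecidableEq A] where
  src : A → V
  dst : A → V
  cap : A → ℝ
  s : V
  t : V
  dummy : A
  src_dummy : src dummy = t
  dst_dummy : dst dummy = s
  cap_nonneg : ∀ a, 0 ≤ cap a

variable {V A : Type} [Fintype V] [Fintype A] [DecidableEq V] [DecidableEq A]

/-- Flow conservation at every vertex. -/
def Conserves (N : Network V A) (φ : A → ℝ) : Prop :=
  ∀ w : V, ∑ a ∈ univ.filter (fun a => N.dst a = w), φ a
         = ∑ a ∈ univ.filter (fun a => N.src a = w), φ a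

/-- A feasible flow: nonnegative, respecting capacities on non-dummy arcs,
and conserving flow at every vertex. Its value is `φ N.dummy`. -/
def Feasible (N : Network V A) (φ : A → ℝ) : Prop :=
  Conserves N φ ∧ (∀ a, 0 ≤ φ a) ∧ (∀ a, a ≠ N.dummy → φ a ≤ N.cap a)

/-- A maximum flow: a feasible flow of maximal value. -/
def IsMaxFlow (N : Network V A) (φ : A → ℝ) : Prop :=
  Feasible N φ ∧ ∀ ψ, Feasible N ψ → ψ N.dummy ≤ φ N.dummy

/-- An adaptive flow with respect to a flow `φ` and a set `A'` of deleted arcs. -/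
def Adaptive (N : Network V A) (φ : A → ℝ) (A' : Finset A) (φ' : A → ℝ) : Prop :=
  Conserves N φ' ∧ (∀ a, 0 ≤ φ' a) ∧ (∀ a, φ' a ≤ φ a) ∧ (∀ a ∈ A', φ' a = 0)

/-- The adaptive residual value `ρ(φ, A')`: the maximum value of an adaptive
flow with respect to `φ` and `A'`. -/
noncomputable def rho (N : Network V A) (φ : A → ℝ) (A' : Finset A) : ℝ :=
  sSup {x | ∃ φ', Adaptive N φ A' φ' ∧ x = φ' N.dummy}

/-- Auxiliary: path flow along a reflexive-transitive chain. -/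
lemma exists_pathflow (N : Network V A) (a : A) (θ : A → ℝ) (v : V)
    (h : Relation.ReflTransGen
        (fun u w => ∃ e, e ≠ a ∧ 0 < θ e ∧ N.src e = u ∧ N.dst e = w) N.s v) :
    ∃ δ : A → ℝ, (∀ e, 0 ≤ δ e) ∧ δ a = 0 ∧ (∀ e, 0 < δ e → 0 < θ e) ∧
      ∀ w : V, (∑ e ∈ univ.filter (fun e => N.dst e = w), δ e)
          - (∑ e ∈ univ.filter (fun e => N.src e = w), δ e)
        = (if w = v then (1:ℝ) else 0) - (if w = N.s then 1 else 0) := by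
  induction h with
  | refl =>
    exact ⟨fun _ => 0, fun _ => le_rfl, rfl, fun e he => absurd he (lt_irrefl 0), by
      intro w; simp⟩
  | @tail v v' hsv step ih =>
    obtain ⟨δ, hδ0, hδa, hδθ, hδcons⟩ := ih
    obtain ⟨e, hea, heθ, hes, hed⟩ := step
    refine ⟨fun f => δ f + (if f = e then 1 else 0), ?_, ?_, ?_, ?_⟩
    · intro f; have := hδ0 f; positivity
    · simp [hδa, Ne.symm hea]
    · intro f hf
      by_cases hfe : f = e
      · subst hfe; exact heθ
      · simp only [hfe, if_false, add_zero] at hf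
        exact hδθ f hf
    · intro w
      have h1 : ∀ (g : A → V), ∑ f ∈ univ.filter (fun f => g f = w),
          (δ f + (if f = e then (1:ℝ) else 0))
          = (∑ f ∈ univ.filter (fun f => g f = w), δ f) + (if g e = w then 1 else 0) := by
        intro g
        rw [Finset.sum_add_distrib]
        congr 1
        rw [Finset.sum_ite_eq' (univ.filter fun f => g f = w) e (fun _ => (1:ℝ))]
        simp
      rw [h1 N.dst, h1 N.src, hes, hed]
      have hc := hδcons w
      have e1 : (if v' = w then (1:ℝ) else 0) = (if w = v' then 1 else 0) := by
        by_cases h : v' = w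
        · simp [h]
        · simp [h, Ne.symm h]
      have e2 : (if v = w then (1:ℝ) else 0) = (if w = v then 1 else 0) := by
        by_cases h : v = w
        · simp [h]
        · simp [h, Ne.symm h]
      rw [e1, e2]
      linarith [hc]

/-- Key lemma: a value-maximal adaptive flow loses at most `φ a`. -/
lemma max_adaptive_ge (N : Network V A) (φ : A → ℝ) (hφ : Feasible N φ) (a : A)
    (ha : a ≠ N.dummy) (φ' : A → ℝ) (hφ' : Adaptive N φ {a} φ')
    (hmax : ∀ ψ, Adaptive N φ {a} ψ → ψ N.dummy ≤ φ' N.dummy) :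
    φ N.dummy - φ a ≤ φ' N.dummy := by
  classical
  by_contra hcon
  push_neg at hcon
  obtain ⟨hc', h0', hle', hzero'⟩ := hφ'
  obtain ⟨hcφ, h0φ, -⟩ := hφ
  set θ : A → ℝ := fun e => φ e - φ' e with hθdef
  have hθ0 : ∀ e, 0 ≤ θ e := fun e => sub_nonneg.2 (hle' e)
  have hθa : θ a = φ a := by
    simp [hθdef, hzero' a (Finset.mem_singleton_self a)]
  have hθdummy : φ a < θ N.dummy := by
    simp only [hθdef]; linarith
  have hθcons : ∀ w, ∑ e ∈ univ.filter (fun e => N.dst e = w), θ e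
      = ∑ e ∈ univ.filter (fun e => N.src e = w), θ e := by
    intro w
    simp only [hθdef, Finset.sum_sub_distrib]
    rw [hcφ w, hc' w]
  set R : V → V → Prop := fun u w => ∃ e, e ≠ a ∧ 0 < θ e ∧ N.src e = u ∧ N.dst e = w
    with hRdef
  by_cases hreach : Relation.ReflTransGen R N.s N.t
  · -- augmenting path exists: contradict maximality
    obtain ⟨δ, hδ0, hδa, hδθ, hδcons⟩ := exists_pathflow N a θ N.t hreach
    have hθdum_pos : 0 < θ N.dummy := lt_of_le_of_lt (h0φ a) hθdummy
    set posE : Finset A := univ.filter (fun e => 0 < θ e) with hposE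
    have hdum_mem : N.dummy ∈ posE := by simp [hposE, hθdum_pos]
    have hposne : posE.Nonempty := ⟨N.dummy, hdum_mem⟩
    set m : ℝ := posE.inf' hposne θ with hm
    have hm_pos : 0 < m := by
      rw [hm, Finset.lt_inf'_iff]
      intro e he
      exact (Finset.mem_filter.1 he).2
    have hm_le : ∀ e, 0 < θ e → m ≤ θ e := fun e he =>
      Finset.inf'_le θ (by simp [hposE, he])
    set K : ℝ := (∑ e, δ e) + 1 with hK
    have hsumδ : 0 ≤ ∑ e, δ e := Finset.sum_nonneg fun e _ => hδ0 e
    have hK_pos : 0 < K := by rw [hK]; linarith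
    set ε : ℝ := m / K with hε
    have hε_pos : 0 < ε := div_pos hm_pos hK_pos
    set c : A → ℝ := fun e => δ e + (if e = N.dummy then 1 else 0) with hcdef
    have hc0 : ∀ e, 0 ≤ c e := by
      intro e; have := hδ0 e; simp only [hcdef]; positivity
    have hcK : ∀ e, c e ≤ K := by
      intro e
      have h1 : δ e ≤ ∑ f, δ f := Finset.single_le_sum (fun f _ => hδ0 f) (mem_univ e)
      have h2 : (if e = N.dummy then (1:ℝ) else 0) ≤ 1 := by split <;> norm_num
      simp only [hcdef, hK]; linarith
    have hcθ : ∀ e, 0 < c e → ε * c e ≤ θ e := by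
      intro e hce
      have hθe : 0 < θ e := by
        by_cases h : 0 < δ e
        · exact hδθ e h
        · have hδe : δ e = 0 := le_antisymm (not_lt.1 h) (hδ0 e)
          have : e = N.dummy := by
            by_contra hne
            simp [hcdef, hδe, hne] at hce
          rw [this]; exact hθdum_pos
      calc ε * c e ≤ ε * K := by
            exact mul_le_mul_of_nonneg_left (hcK e) hε_pos.le
        _ = m := by rw [hε]; field_simp
        _ ≤ θ e := hm_le e hθe
    set ψ : A → ℝ := fun e => φ' e + ε * c e with hψdef
    have hψ_adaptive : Adaptive N φ {a} ψ := by
      refine ⟨?_, ?_, ?_, ?_⟩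
      · intro w
        have hsum : ∀ (g : A → V), ∑ f ∈ univ.filter (fun f => g f = w), ψ f
            = (∑ f ∈ univ.filter (fun f => g f = w), φ' f)
              + ε * ((∑ f ∈ univ.filter (fun f => g f = w), δ f)
                + (if g N.dummy = w then 1 else 0)) := by
          intro g
          simp only [hψdef, hcdef]
          rw [Finset.sum_add_distrib]
          congr 1
          rw [← Finset.mul_sum]
          congr 1
          rw [Finset.sum_add_distrib,
            Finset.sum_ite_eq' (univ.filter fun f => g f = w) N.dummy (fun _ => (1:ℝ))]
          simp
        rw [hsum N.dst, hsum N.src, hc' w, N.src_dummy, N.dst_dummy]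
        have hc := hδcons w
        have e1 : (if N.s = w then (1:ℝ) else 0) = (if w = N.s then 1 else 0) := by
          by_cases h : N.s = w
          · simp [h]
          · simp [h, Ne.symm h]
        have e2 : (if N.t = w then (1:ℝ) else 0) = (if w = N.t then 1 else 0) := by
          by_cases h : N.t = w
          · simp [h]
          · simp [h, Ne.symm h]
        rw [e1, e2]
        have : (∑ f ∈ univ.filter (fun f => N.dst f = w), δ f)
            + (if w = N.s then (1:ℝ) else 0)
            = (∑ f ∈ univ.filter (fun f => N.src f = w), δ f)
              + (if w = N.t then 1 else 0) := by linarith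
        rw [this]
      · intro e
        have := h0' e
        have := hc0 e
        have := hε_pos.le
        simp only [hψdef]
        positivity
      · intro e
        by_cases h : 0 < c e
        · have h1 := hcθ e h
          simp only [hψdef, hθdef] at h1 ⊢
          linarith
        · have hce : c e = 0 := le_antisymm (not_lt.1 h) (hc0 e)
          simp only [hψdef, hce, mul_zero, add_zero]
          exact hle' e
      · intro e he
        rw [Finset.mem_singleton] at he
        subst he
        have hca : c e = 0 := by simp [hcdef, hδa, ha]
        simp [hψdef, hca, hzero' e (Finset.mem_singleton_self e)]
    have hgt : φ' N.dummy < ψ N.dummy := by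
      have h1 : (1:ℝ) ≤ c N.dummy := by
        have := hδ0 N.dummy
        simp only [hcdef, if_pos rfl]
        simp only [if_true]
        linarith
      have : ε ≤ ε * c N.dummy := by nlinarith
      simp only [hψdef]
      linarith
    exact absurd (hmax ψ hψ_adaptive) (not_le.2 hgt)
  · -- no augmenting path: cut argument shows θ N.dummy ≤ φ a, contradiction
    set S : Finset V := univ.filter (fun v => Relation.ReflTransGen R N.s v) with hSdef
    have hsS : N.s ∈ S := by
      simp only [hSdef, Finset.mem_filter, Finset.mem_univ, true_and]
      exact Relation.ReflTransGen.refl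
    have htS : N.t ∉ S := by
      simp only [hSdef, Finset.mem_filter, Finset.mem_univ, true_and]
      exact hreach
    have h1 : ∑ e ∈ univ.filter (fun e => N.dst e ∈ S), θ e
        = ∑ e ∈ univ.filter (fun e => N.src e ∈ S), θ e := by
      rw [← Finset.sum_fiberwise_eq_sum_filter univ S N.dst θ,
        ← Finset.sum_fiberwise_eq_sum_filter univ S N.src θ]
      exact Finset.sum_congr rfl fun w _ => hθcons w
    set Fin : Finset A := univ.filter (fun e => N.dst e ∈ S) with hFin
    set Fout : Finset A := univ.filter (fun e => N.src e ∈ S) with hFout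
    have h2 : ∑ e ∈ Fin \ Fout, θ e = ∑ e ∈ Fout \ Fin, θ e := by
      have ha1 := Finset.sum_inter_add_sum_sdiff Fin Fout θ
      have ha2 := Finset.sum_inter_add_sum_sdiff Fout Fin θ
      rw [Finset.inter_comm] at ha2
      linarith
    have h3 : θ N.dummy ≤ ∑ e ∈ Fin \ Fout, θ e := by
      apply Finset.single_le_sum (fun e _ => hθ0 e)
      rw [Finset.mem_sdiff]
      constructor
      · simp [hFin, N.dst_dummy, hsS]
      · simp only [hFout, Finset.mem_filter, Finset.mem_univ, true_and, N.src_dummy]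
        exact htS
    have h4 : ∑ e ∈ Fout \ Fin, θ e ≤ θ a := by
      have hz : ∀ e ∈ Fout \ Fin, θ e = if e = a then θ e else 0 := by
        intro e he
        rw [Finset.mem_sdiff, hFout, hFin] at he
        simp only [Finset.mem_filter, Finset.mem_univ, true_and] at he
        by_cases hea : e = a
        · simp [hea]
        · simp only [hea, if_false]
          by_contra h
          have hpos : 0 < θ e := lt_of_le_of_ne (hθ0 e) (Ne.symm h)
          have hsrc : Relation.ReflTransGen R N.s (N.src e) := by
            have h5 := he.1
            simp only [hSdef, Finset.mem_filter, Finset.mem_univ, true_and] at h5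
            exact h5
          have hdst : Relation.ReflTransGen R N.s (N.dst e) :=
            hsrc.tail ⟨e, hea, hpos, rfl, rfl⟩
          refine he.2 ?_
          simp only [hSdef, Finset.mem_filter, Finset.mem_univ, true_and]
          exact hdst
      calc ∑ e ∈ Fout \ Fin, θ e = ∑ e ∈ Fout \ Fin, if e = a then θ e else 0 :=
            Finset.sum_congr rfl hz
        _ = if a ∈ Fout \ Fin then θ a else 0 := Finset.sum_ite_eq' _ a θ
        _ ≤ θ a := by
            split
            · exact le_rfl
            · exact hθ0 a
    have : θ N.dummy ≤ φ a := by
      rw [← hθa]; linarith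
    linarith

/-- There exists a value-maximal adaptive flow. -/
lemma exists_max_adaptive (N : Network V A) (φ : A → ℝ) (hφ : Feasible N φ)
    (A' : Finset A) :
    ∃ φ', Adaptive N φ A' φ' ∧ ∀ ψ, Adaptive N φ A' ψ → ψ N.dummy ≤ φ' N.dummy := by
  classical
  set P : Set (A → ℝ) := {ψ | Adaptive N φ A' ψ} with hP
  have hzeroP : (fun _ => (0:ℝ)) ∈ P := by
    refine ⟨fun w => by simp, fun _ => le_rfl, fun e => hφ.2.1 e, fun _ _ => rfl⟩
  have hsub : P ⊆ Set.Icc 0 φ := by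
    rintro ψ ⟨-, h0, hle, -⟩
    exact ⟨fun e => h0 e, fun e => hle e⟩
  have hclosed : IsClosed P := by
    have hA : IsClosed {ψ : A → ℝ | Conserves N ψ} := by
      have : {ψ : A → ℝ | Conserves N ψ}
          = ⋂ w : V, {ψ : A → ℝ | ∑ e ∈ univ.filter (fun e => N.dst e = w), ψ e
              = ∑ e ∈ univ.filter (fun e => N.src e = w), ψ e} := by
        ext ψ; simp [Conserves, Set.mem_iInter]
      rw [this]
      exact isClosed_iInter fun w => isClosed_eq
        (continuous_finset_sum _ fun e _ => continuous_apply e)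
        (continuous_finset_sum _ fun e _ => continuous_apply e)
    have hB : IsClosed {ψ : A → ℝ | ∀ e, 0 ≤ ψ e} := by
      have : {ψ : A → ℝ | ∀ e, 0 ≤ ψ e} = ⋂ e : A, {ψ : A → ℝ | 0 ≤ ψ e} := by
        ext ψ; simp [Set.mem_iInter]
      rw [this]
      exact isClosed_iInter fun e => isClosed_le continuous_const (continuous_apply e)
    have hC : IsClosed {ψ : A → ℝ | ∀ e, ψ e ≤ φ e} := by
      have : {ψ : A → ℝ | ∀ e, ψ e ≤ φ e} = ⋂ e : A, {ψ : A → ℝ | ψ e ≤ φ e} := by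
        ext ψ; simp [Set.mem_iInter]
      rw [this]
      exact isClosed_iInter fun e => isClosed_le (continuous_apply e) continuous_const
    have hD : IsClosed {ψ : A → ℝ | ∀ e ∈ A', ψ e = 0} := by
      have : {ψ : A → ℝ | ∀ e ∈ A', ψ e = 0}
          = ⋂ e ∈ A', {ψ : A → ℝ | ψ e = 0} := by
        ext ψ; simp [Set.mem_iInter]
      rw [this]
      exact isClosed_biInter fun e _ => isClosed_eq (continuous_apply e) continuous_const
    have : P = {ψ : A → ℝ | Conserves N ψ} ∩ {ψ | ∀ e, 0 ≤ ψ e}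
        ∩ {ψ | ∀ e, ψ e ≤ φ e} ∩ {ψ | ∀ e ∈ A', ψ e = 0} := by
      ext ψ
      simp only [hP, Set.mem_setOf_eq, Set.mem_inter_iff, Adaptive]
      tauto
    rw [this]
    exact ((hA.inter hB).inter hC).inter hD
  have hcpt : IsCompact P :=
    IsCompact.of_isClosed_subset isCompact_Icc hclosed hsub
  obtain ⟨φ', hφ'P, hmax⟩ :=
    hcpt.exists_isMaxOn ⟨_, hzeroP⟩ ((continuous_apply N.dummy).continuousOn)
  exact ⟨φ', hφ'P, fun ψ hψ => hmax hψ⟩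

/-- destroying a single non-dummy arc `a` loses at most `φ a`
units of flow: some adaptive flow with respect to `φ` and `{a}` has value at
least `φ(t,s) - φ(a)`, and hence `ρ(φ, {a}) ≥ φ(t,s) - φ(a)`. -/
theorem single_arc_loss_le_flow (N : Network V A) (φ : A → ℝ)
    (hφ : Feasible N φ) (a : A) (ha : a ≠ N.dummy) :
    (∃ φ', Adaptive N φ {a} φ' ∧ φ N.dummy - φ a ≤ φ' N.dummy) ∧
      φ N.dummy - φ a ≤ rho N φ {a} := by
  obtain ⟨φ', hφ', hmax⟩ := exists_max_adaptive N φ hφ {a}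
  have hge : φ N.dummy - φ a ≤ φ' N.dummy :=
    max_adaptive_ge N φ hφ a ha φ' hφ' hmax
  refine ⟨⟨φ', hφ', hge⟩, ?_⟩
  have hbdd : BddAbove {x | ∃ ψ, Adaptive N φ {a} ψ ∧ x = ψ N.dummy} := by
    refine ⟨φ N.dummy, ?_⟩
    rintro x ⟨ψ, hψ, rfl⟩
    exact hψ.2.2.1 N.dummy
  have hmem : φ' N.dummy ∈ {x | ∃ ψ, Adaptive N φ {a} ψ ∧ x = ψ N.dummy} :=
    ⟨φ', hφ', rfl⟩
  exact le_trans hge (le_csSup hbdd hmem)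
end

section
/- For every feasible flow φ on G and every finite set A' ⊆ A \ {(t,s)} of deleted arcs, there exists an adaptive flow φ' with respect to φ and A' whose value satisfies φ'(t,s) ≥ φ(t,s) − Σ_{a ∈ A'} φ(a); hence the adaptive residual value satisfies ρ(φ, A') ≥ φ(t,s) − Σ_{a ∈ A'} φ(a), i.e., the loss caused by destroying the arcs of A' is at most the total flow they carried. -/
open Finset

variable {V A : Type} [Fintype V] [Fintype A] [DecidableEq V] [DecidableEq A]

namespace SetLossAux

/-- `IsWalk N u v L`: the arc list `L` is a walk from `u` to `v`. -/
def IsWalk (N : Network V A) : V → V → List A → Prop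
  | u, v, [] => u = v
  | u, v, a :: L => N.src a = u ∧ IsWalk N (N.dst a) v L

theorem isWalk_append {N : Network V A} :
    ∀ (L₁ L₂ : List A) (u v : V), IsWalk N u v (L₁ ++ L₂) ↔
      ∃ w, IsWalk N u w L₁ ∧ IsWalk N w v L₂ := by
  intro L₁
  induction L₁ with
  | nil =>
      intro L₂ u v
      constructor
      · intro h; exact ⟨u, rfl, h⟩
      · rintro ⟨w, hw, h⟩; cases hw; exact h
  | cons a L ih =>
      intro L₂ u v
      constructor
      · rintro ⟨hs, h⟩
        obtain ⟨w, h1, h2⟩ := (ih L₂ (N.dst a) v).mp h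
        exact ⟨w, ⟨hs, h1⟩, h2⟩
      · rintro ⟨w, ⟨hs, h1⟩, h2⟩
        exact ⟨hs, (ih L₂ (N.dst a) v).mpr ⟨w, h1, h2⟩⟩

/-- Counting in/out degrees along a walk. -/
theorem isWalk_count {N : Network V A} :
    ∀ (L : List A) (u v : V), IsWalk N u v L → ∀ w : V,
      L.countP (fun a => N.dst a = w) + (if u = w then 1 else 0)
        = L.countP (fun a => N.src a = w) + (if v = w then 1 else 0) := by
  intro L
  induction L with
  | nil => intro u v h w; cases h; rfl
  | cons a L ih =>
      intro u v h w
      obtain ⟨hs, hL⟩ := h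
      have key := ih (N.dst a) v hL w
      simp only [List.countP_cons]
      subst hs
      by_cases h1 : N.dst a = w <;> by_cases h2 : N.src a = w <;>
        by_cases h3 : v = w <;> simp [h1, h2, h3] at key ⊢ <;> omega

theorem exists_dup_decomp {α : Type*} :
    ∀ (L : List α), ¬L.Nodup → ∃ (x : α) (L₁ L₂ L₃ : List α),
      L = L₁ ++ x :: (L₂ ++ x :: L₃) := by
  intro L
  induction L with
  | nil => intro h; exact absurd List.nodup_nil h
  | cons a L ih =>
      intro h
      by_cases ha : a ∈ L
      · obtain ⟨L₂, L₃, rfl⟩ := List.append_of_mem ha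
        exact ⟨a, [], L₂, L₃, rfl⟩
      · have : ¬L.Nodup := fun hn => h (hn.cons ha)
        obtain ⟨x, L₁, L₂, L₃, rfl⟩ := ih this
        exact ⟨x, a :: L₁, L₂, L₃, rfl⟩

theorem isWalk_dedup {N : Network V A} :
    ∀ (n : ℕ) (L : List A) (u v : V), L.length ≤ n → IsWalk N u v L →
      ∃ L', IsWalk N u v L' ∧ L'.Nodup ∧ ∀ a ∈ L', a ∈ L := by
  intro n
  induction n with
  | zero =>
      intro L u v hl hw
      rw [Nat.le_zero, List.length_eq_zero_iff] at hl
      exact ⟨L, hw, by simp [hl], fun a ha => ha⟩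
  | succ n ih =>
      intro L u v hl hw
      by_cases hnd : L.Nodup
      · exact ⟨L, hw, hnd, fun a ha => ha⟩
      · obtain ⟨x, L₁, L₂, L₃, rfl⟩ := exists_dup_decomp L hnd
        obtain ⟨w₁, hw₁, h2⟩ := (isWalk_append L₁ (x :: (L₂ ++ x :: L₃)) u v).mp hw
        obtain ⟨hs, hrest⟩ := h2
        obtain ⟨w₂, _, h4⟩ := (isWalk_append L₂ (x :: L₃) (N.dst x) v).mp hrest
        have hw' : IsWalk N u v (L₁ ++ x :: L₃) :=
          (isWalk_append L₁ (x :: L₃) u v).mpr ⟨w₁, hw₁, hs, h4.2⟩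
        have hlen : (L₁ ++ x :: L₃).length ≤ n := by
          simp at hl ⊢; omega
        obtain ⟨L', h1, h2, h3⟩ := ih _ u v hlen hw'
        refine ⟨L', h1, h2, fun a ha => ?_⟩
        have := h3 a ha
        simp at this ⊢
        tauto

/-- Step relation: an arc with positive flow from `u` to `v`. -/
def PosStep (N : Network V A) (φ : A → ℝ) (u v : V) : Prop :=
  ∃ a, 0 < φ a ∧ N.src a = u ∧ N.dst a = v

open Relation in
theorem reach_src {N : Network V A} {φ : A → ℝ} (hc : Conserves N φ)
    (hpos : ∀ a, 0 ≤ φ a) {a₀ : A} (h0 : 0 < φ a₀) :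
    ReflTransGen (PosStep N φ) (N.dst a₀) (N.src a₀) := by
  classical
  by_contra hnot
  set S : Finset V := univ.filter (fun w => ReflTransGen (PosStep N φ) (N.dst a₀) w) with hS
  have hdstS : N.dst a₀ ∈ S := by
    simp only [hS, mem_filter, mem_univ, true_and]
    exact ReflTransGen.refl
  have hsrcS : N.src a₀ ∉ S := by simpa [hS] using hnot
  have hclosed : ∀ a, 0 < φ a → N.src a ∈ S → N.dst a ∈ S := by
    intro a ha hs
    simp only [hS, mem_filter, mem_univ, true_and] at hs ⊢
    exact hs.tail ⟨a, ha, rfl, rfl⟩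
  have hd : ∑ a ∈ univ.filter (fun a => N.dst a ∈ S), φ a
      = ∑ a ∈ univ.filter (fun a => N.src a ∈ S), φ a := by
    rw [← Finset.sum_fiberwise_eq_sum_filter univ S N.dst φ,
        ← Finset.sum_fiberwise_eq_sum_filter univ S N.src φ]
    exact Finset.sum_congr rfl fun w _ => hc w
  have split1 := Finset.sum_filter_add_sum_filter_not
    (univ.filter (fun a => N.dst a ∈ S)) (fun a => N.src a ∈ S) φ
  have split2 := Finset.sum_filter_add_sum_filter_not
    (univ.filter (fun a => N.src a ∈ S)) (fun a => N.dst a ∈ S) φ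
  have hcomm : (univ.filter (fun a => N.dst a ∈ S)).filter (fun a => N.src a ∈ S)
      = (univ.filter (fun a => N.src a ∈ S)).filter (fun a => N.dst a ∈ S) := by
    ext a; simp; tauto
  have hzero : ∑ a ∈ (univ.filter (fun a => N.src a ∈ S)).filter
      (fun a => ¬ N.dst a ∈ S), φ a = 0 := by
    apply Finset.sum_eq_zero
    intro a ha
    simp only [mem_filter, mem_univ, true_and] at ha
    by_contra hne
    exact ha.2 (hclosed a (lt_of_le_of_ne (hpos a) (Ne.symm hne)) ha.1)
  have hbig : φ a₀ ≤ ∑ a ∈ (univ.filter (fun a => N.dst a ∈ S)).filter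
      (fun a => ¬ N.src a ∈ S), φ a := by
    apply Finset.single_le_sum (fun a _ => hpos a)
    simp only [mem_filter, mem_univ, true_and]
    exact ⟨hdstS, hsrcS⟩
  rw [hcomm] at split1
  linarith

open Relation in
theorem reach_toWalk {N : Network V A} {φ : A → ℝ} {u v : V}
    (h : ReflTransGen (PosStep N φ) u v) :
    ∃ L, IsWalk N u v L ∧ ∀ a ∈ L, 0 < φ a := by
  induction h using Relation.ReflTransGen.head_induction_on with
  | refl => exact ⟨[], rfl, by simp⟩
  | head hstep _ ih =>
      obtain ⟨a, ha, hs, hd⟩ := hstep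
      obtain ⟨L, hL, hLpos⟩ := ih
      subst hd
      refine ⟨a :: L, ⟨hs, hL⟩, ?_⟩
      intro b hb
      rcases List.mem_cons.mp hb with rfl | hb
      · exact ha
      · exact hLpos b hb

/-- Every positive-flow arc of a conserving nonnegative flow lies on a
positive-flow cycle with pairwise distinct arcs. -/
theorem exists_cycle {N : Network V A} {φ : A → ℝ} (hc : Conserves N φ)
    (hpos : ∀ a, 0 ≤ φ a) {a₀ : A} (h0 : 0 < φ a₀) :
    ∃ C : List A, IsWalk N (N.src a₀) (N.src a₀) C ∧ C.Nodup ∧ a₀ ∈ C ∧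
      ∀ a ∈ C, 0 < φ a := by
  obtain ⟨L, hL, hLpos⟩ := reach_toWalk (reach_src hc hpos h0)
  obtain ⟨L', hL', hnd, hsub⟩ := isWalk_dedup L.length L (N.dst a₀) (N.src a₀) le_rfl hL
  have hL'pos : ∀ a ∈ L', 0 < φ a := fun a ha => hLpos a (hsub a ha)
  by_cases ha₀ : a₀ ∈ L'
  · obtain ⟨P, Q, rfl⟩ := List.append_of_mem ha₀
    obtain ⟨w, hP, hrest⟩ := (isWalk_append P (a₀ :: Q) (N.dst a₀) (N.src a₀)).mp hL'
    obtain ⟨hsrc, -⟩ := hrest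
    have ha₀P : a₀ ∉ P := by
      rcases List.nodup_append'.mp hnd with ⟨_, _, hdisj⟩
      intro hmem
      exact hdisj hmem List.mem_cons_self
    refine ⟨a₀ :: P, ⟨rfl, hsrc ▸ hP⟩, ?_, List.mem_cons_self, ?_⟩
    · exact List.Nodup.cons ha₀P ((List.nodup_append'.mp hnd).1)
    · intro a ha
      rcases List.mem_cons.mp ha with rfl | ha
      · exact h0
      · exact hL'pos a (List.mem_append_left _ ha)
  · refine ⟨a₀ :: L', ⟨rfl, hL'⟩, List.Nodup.cons ha₀ hnd, List.mem_cons_self, ?_⟩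
    intro a ha
    rcases List.mem_cons.mp ha with rfl | ha
    · exact h0
    · exact hL'pos a ha

/-- Summing list multiplicities over a filtered finset gives `countP`. -/
theorem sum_count_eq_countP (p : A → Prop) [DecidablePred p] :
    ∀ L : List A, ∑ a ∈ univ.filter p, (L.count a : ℝ)
      = (L.countP (fun a => p a) : ℕ) := by
  intro L
  induction L with
  | nil => simp
  | cons b L ih =>
      simp only [List.count_cons, List.countP_cons, beq_iff_eq, decide_eq_true_eq]
      push_cast
      rw [Finset.sum_add_distrib, ih]
      have key : ∑ a ∈ univ.filter p, (if b = a then (1:ℝ) else 0)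
          = if p b then 1 else 0 := by
        rw [Finset.sum_ite_eq (univ.filter p) b (fun _ => (1:ℝ))]
        simp
      rw [key]

/-- Cancellation step: a positive-flow arc supports a cycle-shaped subflow. -/
theorem cancel_step {N : Network V A} {φ : A → ℝ} (hc : Conserves N φ)
    (hpos : ∀ a, 0 ≤ φ a) {a₀ : A} (h0 : 0 < φ a₀) :
    ∃ ψ : A → ℝ, Conserves N ψ ∧ (∀ a, 0 ≤ ψ a) ∧ (∀ a, ψ a ≤ φ a) ∧
      0 < ψ a₀ ∧ ψ N.dummy ≤ ψ a₀ ∧ (∃ b, 0 < φ b ∧ ψ b = φ b) ∧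
      (∀ a, ψ a ≠ 0 → 0 < φ a) := by
  obtain ⟨C, hCwalk, hCnd, hCa₀, hCpos⟩ := exists_cycle hc hpos h0
  obtain ⟨amin, hminmem, hmin⟩ := Finset.exists_min_image C.toFinset φ
    ⟨a₀, List.mem_toFinset.mpr hCa₀⟩
  rw [List.mem_toFinset] at hminmem
  set ε : ℝ := φ amin with hε
  have hεpos : 0 < ε := hCpos amin hminmem
  have hεle : ∀ a ∈ C, ε ≤ φ a := fun a ha => hmin a (List.mem_toFinset.mpr ha)
  refine ⟨fun a => ε * (C.count a : ℝ), ?_, ?_, ?_, ?_, ?_, ?_, ?_⟩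
  · intro w
    rw [← Finset.mul_sum, ← Finset.mul_sum,
      sum_count_eq_countP (fun a => N.dst a = w) C,
      sum_count_eq_countP (fun a => N.src a = w) C]
    have := isWalk_count C (N.src a₀) (N.src a₀) hCwalk w
    have hcnt : C.countP (fun a => N.dst a = w) = C.countP (fun a => N.src a = w) := by
      omega
    rw [hcnt]
  · intro a; positivity
  · intro a
    show ε * (C.count a : ℝ) ≤ φ a
    by_cases ha : a ∈ C
    · rw [List.count_eq_one_of_mem hCnd ha]
      simpa using hεle a ha
    · rw [List.count_eq_zero.mpr ha]
      simpa using hpos a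
  · show 0 < ε * (C.count a₀ : ℝ)
    rw [List.count_eq_one_of_mem hCnd hCa₀]; simpa using hεpos
  · show ε * (C.count N.dummy : ℝ) ≤ ε * (C.count a₀ : ℝ)
    rw [List.count_eq_one_of_mem hCnd hCa₀]
    have h1 : (C.count N.dummy : ℝ) ≤ 1 := by
      exact_mod_cast List.nodup_iff_count_le_one.mp hCnd N.dummy
    push_cast
    nlinarith
  · refine ⟨amin, hεpos, ?_⟩
    show ε * (C.count amin : ℝ) = φ amin
    rw [List.count_eq_one_of_mem hCnd hminmem]
    simp [hε]
  · intro a ha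
    have : a ∈ C := by
      by_contra hmem
      refine ha ?_
      show ε * (C.count a : ℝ) = 0
      rw [List.count_eq_zero.mpr hmem]; simp
    exact hCpos a this

/-- Decomposition: the flow through `a₀` is carried by a subflow `ψ ≤ φ` whose
value through the dummy arc is at most `φ a₀`. -/
theorem decomp {N : Network V A} :
    ∀ (n : ℕ) (φ : A → ℝ), Conserves N φ → (∀ a, 0 ≤ φ a) →
      (univ.filter (fun a => φ a ≠ 0)).card ≤ n → ∀ a₀ : A,
      ∃ ψ : A → ℝ, Conserves N ψ ∧ (∀ a, 0 ≤ ψ a) ∧ (∀ a, ψ a ≤ φ a) ∧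
        ψ a₀ = φ a₀ ∧ ψ N.dummy ≤ φ a₀ := by
  intro n
  induction n with
  | zero =>
      intro φ hc hpos hcard a₀
      have hzero : ∀ a, φ a = 0 := by
        intro a
        by_contra ha
        have : a ∈ univ.filter (fun a => φ a ≠ 0) := by simp [ha]
        have := Finset.card_pos.mpr ⟨a, this⟩
        omega
      exact ⟨fun _ => 0, fun w => by simp, fun a => le_refl 0,
        fun a => (hzero a).ge, (hzero a₀).symm, by simp [hzero a₀]⟩
  | succ n ih =>
      intro φ hc hpos hcard a₀
      rcases eq_or_lt_of_le (hpos a₀) with h0 | h0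
      · exact ⟨fun _ => 0, fun w => by simp, fun a => le_refl 0,
          fun a => hpos a, by simp [← h0], by simp [← h0]⟩
      · obtain ⟨ψ₁, hψ₁c, hψ₁pos, hψ₁le, hψ₁a₀, hψ₁dummy, ⟨b, hbpos, hbeq⟩, hψ₁supp⟩ :=
          cancel_step hc hpos h0
        set φ₂ : A → ℝ := fun a => φ a - ψ₁ a with hφ₂
        have hφ₂c : Conserves N φ₂ := by
          intro w
          simp only [hφ₂, Finset.sum_sub_distrib]
          rw [hc w, hψ₁c w]
        have hφ₂pos : ∀ a, 0 ≤ φ₂ a := fun a => sub_nonneg.mpr (hψ₁le a)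
        have hsub : univ.filter (fun a => φ₂ a ≠ 0) ⊆ univ.filter (fun a => φ a ≠ 0) := by
          intro a ha
          simp only [mem_filter, mem_univ, true_and] at ha ⊢
          intro hφa
          apply ha
          have : ψ₁ a = 0 := by
            by_contra hne
            exact absurd hφa (ne_of_gt (hψ₁supp a hne))
          simp [hφ₂, hφa, this]
        have hbmem : b ∈ univ.filter (fun a => φ a ≠ 0) := by
          simp [ne_of_gt hbpos]
        have hbnot : b ∉ univ.filter (fun a => φ₂ a ≠ 0) := by
          simp [hφ₂, hbeq]
        have hcard₂ : (univ.filter (fun a => φ₂ a ≠ 0)).card ≤ n := by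
          have hssub : univ.filter (fun a => φ₂ a ≠ 0) ⊂ univ.filter (fun a => φ a ≠ 0) :=
            ⟨hsub, fun h => hbnot (h hbmem)⟩
          have := Finset.card_lt_card hssub
          omega
        obtain ⟨ψ₂, hψ₂c, hψ₂pos, hψ₂le, hψ₂a₀, hψ₂dummy⟩ := ih φ₂ hφ₂c hφ₂pos hcard₂ a₀
        refine ⟨fun a => ψ₁ a + ψ₂ a, ?_, ?_, ?_, ?_, ?_⟩
        · intro w
          simp only [Finset.sum_add_distrib]
          rw [hψ₁c w, hψ₂c w]
        · intro a; exact add_nonneg (hψ₁pos a) (hψ₂pos a)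
        · intro a
          show ψ₁ a + ψ₂ a ≤ φ a
          have := hψ₂le a
          simp only [hφ₂] at this
          linarith
        · have := hψ₂a₀
          simp only [hφ₂] at this
          simp [this]
        · show ψ₁ N.dummy + ψ₂ N.dummy ≤ φ a₀
          have h1 := hψ₂dummy
          simp only [hφ₂] at h1
          have h2 := hψ₁dummy
          linarith

/-- Deleting one arc loses at most the flow it carried. -/
theorem delete_one {N : Network V A} {φ : A → ℝ} (hc : Conserves N φ)
    (hpos : ∀ a, 0 ≤ φ a) (a₀ : A) :
    ∃ φ' : A → ℝ, Conserves N φ' ∧ (∀ a, 0 ≤ φ' a) ∧ (∀ a, φ' a ≤ φ a) ∧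
      φ' a₀ = 0 ∧ φ N.dummy - φ a₀ ≤ φ' N.dummy := by
  obtain ⟨ψ, hψc, hψpos, hψle, hψa₀, hψd⟩ :=
    decomp (univ.filter (fun a => φ a ≠ 0)).card φ hc hpos le_rfl a₀
  refine ⟨fun a => φ a - ψ a, ?_, ?_, ?_, ?_, ?_⟩
  · intro w
    simp only [Finset.sum_sub_distrib]
    rw [hc w, hψc w]
  · intro a; exact sub_nonneg.mpr (hψle a)
  · intro a
    show φ a - ψ a ≤ φ a
    have := hψpos a; linarith
  · show φ a₀ - ψ a₀ = 0
    rw [hψa₀]; ring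
  · show φ N.dummy - φ a₀ ≤ φ N.dummy - ψ N.dummy
    linarith

end SetLossAux

/-- destroying a set `A'` of non-dummy arcs loses at most the
total flow they carried: some adaptive flow with respect to `φ` and `A'` has
value at least `φ(t,s) - ∑_{a ∈ A'} φ a`, and hence
`ρ(φ, A') ≥ φ(t,s) - ∑_{a ∈ A'} φ a`. -/
theorem set_loss_le_total_flow (N : Network V A) (φ : A → ℝ)
    (hφ : Feasible N φ) (A' : Finset A) (hA' : N.dummy ∉ A') :
    (∃ φ', Adaptive N φ A' φ' ∧ φ N.dummy - ∑ a ∈ A', φ a ≤ φ' N.dummy) ∧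
      φ N.dummy - ∑ a ∈ A', φ a ≤ rho N φ A' := by
  classical
  obtain ⟨hc, hpos, -⟩ := hφ
  have key : ∀ S : Finset A, ∃ φ', Adaptive N φ S φ' ∧
      φ N.dummy - ∑ a ∈ S, φ a ≤ φ' N.dummy := by
    intro S
    induction S using Finset.induction_on with
    | empty =>
        exact ⟨φ, ⟨hc, hpos, fun a => le_rfl, fun a ha => absurd ha (Finset.notMem_empty a)⟩,
          by simp⟩
    | @insert a₀ s ha₀ ih =>
        obtain ⟨φ₁, ⟨hc₁, hpos₁, hle₁, hzero₁⟩, hbound₁⟩ := ih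
        obtain ⟨φ₂, hc₂, hpos₂, hle₂, hz₂, hbound₂⟩ :=
          SetLossAux.delete_one hc₁ hpos₁ a₀
        refine ⟨φ₂, ⟨hc₂, hpos₂, fun a => (hle₂ a).trans (hle₁ a), ?_⟩, ?_⟩
        · intro a ha
          rcases Finset.mem_insert.mp ha with rfl | ha
          · exact hz₂
          · exact le_antisymm (by rw [← hzero₁ a ha]; exact hle₂ a) (hpos₂ a)
        · rw [Finset.sum_insert ha₀]
          have h1 : φ₁ a₀ ≤ φ a₀ := hle₁ a₀
          linarith
  obtain ⟨φ', had, hb⟩ := key A'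
  refine ⟨⟨φ', had, hb⟩, ?_⟩
  refine le_trans hb (le_csSup ?_ ⟨φ', had, rfl⟩)
  refine ⟨φ N.dummy, ?_⟩
  rintro x ⟨ψ, hψ, rfl⟩
  exact hψ.2.2.1 N.dummy
end

section
/- In the network G_b with b ≥ 2, every maximum flow ψ satisfies max over arcs a ∈ A \ {(t,s)} of ( ψ(t,s) − ρ(ψ, {a}) ) ≥ b/2. Combined with the fact that the balanced flow φ* (1 on each s→v arc, b/2 on each v→t arc) achieves worst-case loss exactly b/2, the flow φ* is an optimal solution of the adaptive maximum residual flow problem with 1-arc destruction on G_b. -/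
open Finset

variable {V A : Type} [Fintype V] [Fintype A] [DecidableEq V] [DecidableEq A]

/-- The network `G_b`: vertices `s = 0`, `v = 1`, `t = 2`; `b` parallel arcs
`s → v` of capacity `1`, two parallel arcs `v → t` of capacity `b`, and a
dummy arc `t → s` (its capacity entry is irrelevant). -/
def Gb (b : ℕ) : Network (Fin 3) (Fin b ⊕ Fin 2 ⊕ Unit) where
  src := Sum.elim (fun _ => 0) (Sum.elim (fun _ => 1) (fun _ => 2))
  dst := Sum.elim (fun _ => 1) (Sum.elim (fun _ => 2) (fun _ => 0))
  cap := Sum.elim (fun _ => 1) (Sum.elim (fun _ => (b : ℝ)) (fun _ => 0))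
  s := 0
  t := 2
  dummy := Sum.inr (Sum.inr ())
  src_dummy := rfl
  dst_dummy := rfl
  cap_nonneg := by
    rintro (a | a | a)
    · exact zero_le_one
    · exact Nat.cast_nonneg b
    · exact le_refl 0

/-- The balanced flow `φ*` on `G_b`: one unit on each `s → v` arc, `b/2` units
on each of the two `v → t` arcs, and `b` units on the dummy arc. -/
noncomputable def phiStar (b : ℕ) : (Fin b ⊕ Fin 2 ⊕ Unit) → ℝ :=
  Sum.elim (fun _ => 1) (Sum.elim (fun _ => (b : ℝ) / 2) (fun _ => (b : ℝ)))
lemma conserves_iff (b : ℕ) (φ : Fin b ⊕ Fin 2 ⊕ Unit → ℝ) :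
    Conserves (Gb b) φ ↔
      (φ (Sum.inr (Sum.inr ())) = ∑ i, φ (Sum.inl i)) ∧
      (∑ i, φ (Sum.inl i) = φ (Sum.inr (Sum.inl 0)) + φ (Sum.inr (Sum.inl 1))) := by
  constructor
  · intro h
    have h0 := h 0
    have h1 := h 1
    rw [Finset.sum_filter, Finset.sum_filter] at h0 h1
    simp [Gb, Finset.sum_filter, Fintype.sum_sum_type, Fin.sum_univ_two] at h0 h1
    exact ⟨h0, h1⟩
  · rintro ⟨h0, h1⟩ w
    fin_cases w <;>
      rw [Finset.sum_filter, Finset.sum_filter] <;>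
      simp [Gb, Finset.sum_filter, Fintype.sum_sum_type, Fin.sum_univ_two] <;>
      linarith

lemma rho_le {N : Network V A} {φ : A → ℝ} {A' : Finset A} {c : ℝ} (hc : 0 ≤ c)
    (h : ∀ φ', Adaptive N φ A' φ' → φ' N.dummy ≤ c) : rho N φ A' ≤ c := by
  apply Real.sSup_le _ hc
  rintro x ⟨φ', hφ', rfl⟩
  exact h φ' hφ'

lemma le_rho {N : Network V A} {φ : A → ℝ} {A' : Finset A} {φ' : A → ℝ}
    (h : Adaptive N φ A' φ') : φ' N.dummy ≤ rho N φ A' := by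
  apply le_csSup
  · exact ⟨φ N.dummy, by rintro x ⟨ψ, hψ, rfl⟩; exact hψ.2.2.1 N.dummy⟩
  · exact ⟨φ', h, rfl⟩

lemma rho_nonneg {N : Network V A} {φ : A → ℝ} {A' : Finset A}
    (hφ : ∀ a, 0 ≤ φ a) : 0 ≤ rho N φ A' := by
  have : Adaptive N φ A' (fun _ => 0) := by
    refine ⟨fun w => by simp, fun a => le_refl 0, fun a => hφ a, fun a _ => rfl⟩
  exact le_rho this

lemma feasible_value_le {b : ℕ} {φ : Fin b ⊕ Fin 2 ⊕ Unit → ℝ}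
    (h : Feasible (Gb b) φ) : φ (Sum.inr (Sum.inr ())) ≤ b := by
  obtain ⟨hc, hnn, hcap⟩ := h
  obtain ⟨h0, h1⟩ := (conserves_iff b φ).mp hc
  calc φ (Sum.inr (Sum.inr ())) = ∑ i, φ (Sum.inl i) := h0
    _ ≤ ∑ _i : Fin b, (1 : ℝ) :=
        Finset.sum_le_sum fun i _ => by
          have := hcap (Sum.inl i) (by simp [Gb])
          simpa [Gb] using this
    _ = b := by simp

lemma phiStar_feasible {b : ℕ} (hb : 2 ≤ b) : Feasible (Gb b) (phiStar b) := by
  have hb2 : (2:ℝ) ≤ (b:ℝ) := by exact_mod_cast hb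
  refine ⟨(conserves_iff b _).mpr ⟨by simp [phiStar], by simp [phiStar]⟩, ?_, ?_⟩
  · rintro (a | a | a)
    · simp [phiStar]
    · simp only [phiStar, Sum.elim_inr, Sum.elim_inl]; positivity
    · simp only [phiStar, Sum.elim_inr]; positivity
  · rintro (a | a | ⟨⟩) h
    · simp [phiStar, Gb]
    · simp only [phiStar, Gb, Sum.elim_inr, Sum.elim_inl]; linarith
    · exact absurd rfl h

lemma phiStar_max {b : ℕ} (hb : 2 ≤ b) : IsMaxFlow (Gb b) (phiStar b) := by
  refine ⟨phiStar_feasible hb, fun ψ hψ => ?_⟩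
  have := feasible_value_le hψ
  simpa [phiStar, Gb] using this

lemma maxflow_value {b : ℕ} (hb : 2 ≤ b) {ψ : Fin b ⊕ Fin 2 ⊕ Unit → ℝ}
    (h : IsMaxFlow (Gb b) ψ) : ψ (Sum.inr (Sum.inr ())) = b := by
  have h1 := feasible_value_le h.1
  have h2 := h.2 (phiStar b) (phiStar_feasible hb)
  have : phiStar b ((Gb b).dummy) = b := by simp [phiStar, Gb]
  rw [this] at h2
  exact le_antisymm h1 h2
lemma rho_del {b : ℕ} {ψ : Fin b ⊕ Fin 2 ⊕ Unit → ℝ} (hψ0 : ∀ a, 0 ≤ ψ a) (j : Fin 2) :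
    rho (Gb b) ψ {Sum.inr (Sum.inl j)}
      ≤ ψ (Sum.inr (Sum.inl 0)) + ψ (Sum.inr (Sum.inl 1)) - ψ (Sum.inr (Sum.inl j)) := by
  apply rho_le
  · have n0 := hψ0 (Sum.inr (Sum.inl 0))
    have n1 := hψ0 (Sum.inr (Sum.inl 1))
    fin_cases j <;> simp <;> linarith
  · intro φ' hφ'
    obtain ⟨hc, hnn, hle, hz⟩ := hφ'
    obtain ⟨h0, h1⟩ := (conserves_iff b φ').mp hc
    have hd : φ' (Sum.inr (Sum.inr ())) = φ' (Sum.inr (Sum.inl 0)) + φ' (Sum.inr (Sum.inl 1)) :=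
      h0.trans h1
    have hzj : φ' (Sum.inr (Sum.inl j)) = 0 := hz _ (Finset.mem_singleton_self _)
    have l0 := hle (Sum.inr (Sum.inl 0))
    have l1 := hle (Sum.inr (Sum.inl 1))
    have n0 := hnn (Sum.inr (Sum.inl 0))
    have n1 := hnn (Sum.inr (Sum.inl 1))
    show φ' (Sum.inr (Sum.inr ())) ≤ _
    fin_cases j <;> simp_all <;> linarith

lemma part1 {b : ℕ} (hb : 2 ≤ b) (ψ : Fin b ⊕ Fin 2 ⊕ Unit → ℝ)
    (hψ : IsMaxFlow (Gb b) ψ) :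
    (b : ℝ) / 2 ≤ sSup {y : ℝ | ∃ a : Fin b ⊕ Fin 2 ⊕ Unit,
      a ≠ (Gb b).dummy ∧ y = ψ (Gb b).dummy - rho (Gb b) ψ {a}} := by
  have hnn := hψ.1.2.1
  have hv : ψ (Sum.inr (Sum.inr ())) = b := maxflow_value hb hψ
  obtain ⟨h0, h1⟩ := (conserves_iff b ψ).mp hψ.1.1
  have hsum : ψ (Sum.inr (Sum.inl 0)) + ψ (Sum.inr (Sum.inl 1)) = b := by
    rw [← h1, ← h0, hv]
  have hbdd : BddAbove {y : ℝ | ∃ a : Fin b ⊕ Fin 2 ⊕ Unit,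
      a ≠ (Gb b).dummy ∧ y = ψ (Gb b).dummy - rho (Gb b) ψ {a}} := by
    refine ⟨b, ?_⟩
    rintro x ⟨a, ha, rfl⟩
    have hr : (0:ℝ) ≤ rho (Gb b) ψ {a} := rho_nonneg hnn
    have : ψ ((Gb b).dummy) = b := hv
    linarith
  have hdummy : (Gb b).dummy = Sum.inr (Sum.inr ()) := rfl
  rcases le_total (ψ (Sum.inr (Sum.inl 0))) (ψ (Sum.inr (Sum.inl 1))) with h | h
  · have hr := rho_del hnn 1
    have hmem : ψ (Gb b).dummy - rho (Gb b) ψ {Sum.inr (Sum.inl 1)} ∈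
        {y : ℝ | ∃ a : Fin b ⊕ Fin 2 ⊕ Unit,
          a ≠ (Gb b).dummy ∧ y = ψ (Gb b).dummy - rho (Gb b) ψ {a}} :=
      ⟨Sum.inr (Sum.inl 1), by simp [Gb], rfl⟩
    have hval : (b:ℝ)/2 ≤ ψ (Gb b).dummy - rho (Gb b) ψ {Sum.inr (Sum.inl 1)} := by
      rw [hdummy, hv]; linarith
    exact hval.trans (le_csSup hbdd hmem)
  · have hr := rho_del hnn 0
    have hmem : ψ (Gb b).dummy - rho (Gb b) ψ {Sum.inr (Sum.inl 0)} ∈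
        {y : ℝ | ∃ a : Fin b ⊕ Fin 2 ⊕ Unit,
          a ≠ (Gb b).dummy ∧ y = ψ (Gb b).dummy - rho (Gb b) ψ {a}} :=
      ⟨Sum.inr (Sum.inl 0), by simp [Gb], rfl⟩
    have hval : (b:ℝ)/2 ≤ ψ (Gb b).dummy - rho (Gb b) ψ {Sum.inr (Sum.inl 0)} := by
      rw [hdummy, hv]; linarith
    exact hval.trans (le_csSup hbdd hmem)
lemma rho_phiStar_inl {b : ℕ} (hb : 2 ≤ b) (i : Fin b) :
    (b : ℝ) - 1 ≤ rho (Gb b) (phiStar b) {Sum.inl i} := by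
  have hb2 : (2:ℝ) ≤ (b:ℝ) := by exact_mod_cast hb
  set χ : Fin b ⊕ Fin 2 ⊕ Unit → ℝ :=
    Sum.elim (fun k => if k = i then 0 else 1)
      (Sum.elim (fun j => if j = 0 then (b:ℝ)/2 else (b:ℝ)/2 - 1) (fun _ => (b:ℝ) - 1))
    with hχ
  have hsum : ∑ k : Fin b, χ (Sum.inl k) = (b:ℝ) - 1 := by
    have e1 : ∑ k : Fin b, χ (Sum.inl k)
        = ∑ k : Fin b, ((1:ℝ) - if k = i then 1 else 0) := by
      apply Finset.sum_congr rfl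
      intro k _
      simp only [hχ, Sum.elim_inl]
      split <;> ring
    rw [e1, Finset.sum_sub_distrib]
    simp
  have had : Adaptive (Gb b) (phiStar b) {Sum.inl i} χ := by
    refine ⟨(conserves_iff b χ).mpr ⟨?_, ?_⟩, ?_, ?_, ?_⟩
    · rw [hsum]; rfl
    · rw [hsum]; simp [hχ]; ring
    · rintro (a | a | a) <;> simp [hχ] <;> first | (split <;> linarith) | linarith
    · rintro (a | a | a) <;> simp [hχ, phiStar] <;> first | (split <;> linarith) | linarith
    · intro a ha
      rw [Finset.mem_singleton] at ha
      subst ha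
      simp [hχ]
  have := le_rho had
  simpa [hχ, Gb] using this

lemma rho_phiStar_e {b : ℕ} (hb : 2 ≤ b) (j : Fin 2) :
    (b : ℝ) / 2 ≤ rho (Gb b) (phiStar b) {Sum.inr (Sum.inl j)} := by
  have hb2 : (2:ℝ) ≤ (b:ℝ) := by exact_mod_cast hb
  set ζ : Fin b ⊕ Fin 2 ⊕ Unit → ℝ :=
    Sum.elim (fun _ => 1/2)
      (Sum.elim (fun j' => if j' = j then 0 else (b:ℝ)/2) (fun _ => (b:ℝ)/2))
    with hζ
  have hsum : ∑ k : Fin b, ζ (Sum.inl k) = (b:ℝ)/2 := by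
    simp [hζ]; ring
  have had : Adaptive (Gb b) (phiStar b) {Sum.inr (Sum.inl j)} ζ := by
    refine ⟨(conserves_iff b ζ).mpr ⟨?_, ?_⟩, ?_, ?_, ?_⟩
    · rw [hsum]; rfl
    · rw [hsum]
      fin_cases j <;> simp [hζ]
    · rintro (a | a | a) <;> simp [hζ] <;> first | (split <;> linarith) | linarith
    · rintro (a | a | a) <;> simp [hζ, phiStar] <;> first | (split <;> linarith) | linarith
    · intro a ha
      rw [Finset.mem_singleton] at ha
      subst ha
      simp [hζ]
  have := le_rho had
  simpa [hζ, Gb] using this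
lemma part3 {b : ℕ} (hb : 2 ≤ b) :
    sSup {y : ℝ | ∃ a : Fin b ⊕ Fin 2 ⊕ Unit, a ≠ (Gb b).dummy ∧
        y = phiStar b (Gb b).dummy - rho (Gb b) (phiStar b) {a}}
      = (b : ℝ) / 2 := by
  have hb2 : (2:ℝ) ≤ (b:ℝ) := by exact_mod_cast hb
  have hpv : phiStar b ((Gb b).dummy) = (b:ℝ) := rfl
  have hnn : ∀ a, 0 ≤ phiStar b a := (phiStar_feasible hb).2.1
  apply le_antisymm
  · apply Real.sSup_le _ (by positivity)
    rintro x ⟨a, ha, rfl⟩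
    rcases a with i | j | ⟨⟩
    · have := rho_phiStar_inl hb i
      rw [hpv]; linarith
    · have := rho_phiStar_e hb j
      rw [hpv]; linarith
    · exact absurd rfl ha
  · have hr := rho_del (ψ := phiStar b) hnn 0
    have hr' : rho (Gb b) (phiStar b) {Sum.inr (Sum.inl 0)} ≤ (b:ℝ)/2 := by
      have heq : phiStar b (Sum.inr (Sum.inl 0)) + phiStar b (Sum.inr (Sum.inl 1))
          - phiStar b (Sum.inr (Sum.inl 0)) = (b:ℝ)/2 := by
        simp only [phiStar, Sum.elim_inr, Sum.elim_inl]; ring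
      exact heq ▸ hr
    have hbdd : BddAbove {y : ℝ | ∃ a : Fin b ⊕ Fin 2 ⊕ Unit, a ≠ (Gb b).dummy ∧
        y = phiStar b (Gb b).dummy - rho (Gb b) (phiStar b) {a}} := by
      refine ⟨b, ?_⟩
      rintro x ⟨a, ha, rfl⟩
      have := rho_nonneg (N := Gb b) (φ := phiStar b) (A' := {a}) hnn
      rw [hpv]; linarith
    have hmem : phiStar b (Gb b).dummy - rho (Gb b) (phiStar b) {Sum.inr (Sum.inl 0)} ∈
        {y : ℝ | ∃ a : Fin b ⊕ Fin 2 ⊕ Unit, a ≠ (Gb b).dummy ∧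
          y = phiStar b (Gb b).dummy - rho (Gb b) (phiStar b) {a}} :=
      ⟨Sum.inr (Sum.inl 0), by simp [Gb], rfl⟩
    calc (b:ℝ)/2 ≤ phiStar b (Gb b).dummy - rho (Gb b) (phiStar b) {Sum.inr (Sum.inl 0)} := by
          rw [hpv]; linarith
      _ ≤ _ := le_csSup hbdd hmem

/-- in `G_b` (`b ≥ 2`), every maximum flow has worst-case
single-arc-destruction loss at least `b/2`; consequently the balanced flow
`φ*`, whose worst-case loss is exactly `b/2`, is an optimal solution of the
adaptive maximum residual flow problem with 1-arc destruction on `G_b`. -/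
theorem Gb_phiStar_optimal (b : ℕ) (hb : 2 ≤ b) :
    (∀ ψ : Fin b ⊕ Fin 2 ⊕ Unit → ℝ, IsMaxFlow (Gb b) ψ →
      (b : ℝ) / 2 ≤ sSup {y : ℝ | ∃ a : Fin b ⊕ Fin 2 ⊕ Unit,
        a ≠ (Gb b).dummy ∧ y = ψ (Gb b).dummy - rho (Gb b) ψ {a}}) ∧
    IsMaxFlow (Gb b) (phiStar b) ∧
    sSup {y : ℝ | ∃ a : Fin b ⊕ Fin 2 ⊕ Unit, a ≠ (Gb b).dummy ∧
        y = phiStar b (Gb b).dummy - rho (Gb b) (phiStar b) {a}}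
      = (b : ℝ) / 2 ∧
    (∀ ψ : Fin b ⊕ Fin 2 ⊕ Unit → ℝ, IsMaxFlow (Gb b) ψ →
      sSup {y : ℝ | ∃ a : Fin b ⊕ Fin 2 ⊕ Unit, a ≠ (Gb b).dummy ∧
          y = phiStar b (Gb b).dummy - rho (Gb b) (phiStar b) {a}}
      ≤ sSup {y : ℝ | ∃ a : Fin b ⊕ Fin 2 ⊕ Unit, a ≠ (Gb b).dummy ∧
          y = ψ (Gb b).dummy - rho (Gb b) ψ {a}}) := by
  refine ⟨fun ψ h => part1 hb ψ h, phiStar_max hb, part3 hb, fun ψ h => ?_⟩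
  rw [part3 hb]
  exact part1 hb ψ h
end
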